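/- Let u, v, u', v' be vectors in R^2 with u' ≠ 0 and v' ≠ 0, let k, k' be positive integers, and suppose A^k u = v where A = A_{(a,b)} = [[1-ab, a^2], [-b^2, 1+ab]] for a primitive integer vector (a,b). If u ≠ v, then the pair (u, v) uniquely determines a, b and k (up to replacing (a,b) by (-a,-b)); and if u = v, then u is parallel to (a,b) and k is not determined. -/

import Mathlib

/-- The monodromy matrix `A_{(a,b)}`. -/
def Aab (a b : ℤ) : Matrix (Fin 2) (Fin 2) ℤ :=
  !![1 - a * b, a ^ 2; -b ^ 2, 1 + a * b]

lemma Aab_pow (a b : ℤ) (k : ℕ) :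
    Aab a b ^ k = !![1 - k*a*b, k*(a^2); -(k*(b^2)), 1 + k*a*b] := by
  induction k with
  | zero => ext i j; fin_cases i <;> fin_cases j <;> simp [Matrix.one_fin_two]
  | succ n ih =>
    rw [pow_succ, ih]
    unfold Aab
    rw [Matrix.mul_fin_two]
    ext i j; fin_cases i <;> fin_cases j <;> (push_cast; simp; ring)

lemma mulVec_Aab (a b : ℤ) (k : ℕ) (u : Fin 2 → ℝ) :
    ((Aab a b ^ k).map (Int.cast : ℤ → ℝ)).mulVec u =
      ![u 0 - k*a*(b*u 0 - a*u 1), u 1 - k*b*(b*u 0 - a*u 1)] := by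
  rw [Aab_pow]
  funext i
  fin_cases i <;> simp [Matrix.mulVec, dotProduct, Fin.sum_univ_two] <;> ring

lemma gcd_ne_zero (a b : ℤ) (hab : Int.gcd a b = 1) : ¬(a = 0 ∧ b = 0) := by
  rintro ⟨rfl, rfl⟩; simp at hab

theorem stmt19 (a b : ℤ) (hab : Int.gcd a b = 1) (k : ℕ) (hk : 0 < k)
    (u v : Fin 2 → ℝ) (hu : u ≠ 0) (hv : v ≠ 0)
    (h : ((Aab a b ^ k).map (Int.cast : ℤ → ℝ)).mulVec u = v) :
    (u ≠ v →
      ∀ (a' b' : ℤ), Int.gcd a' b' = 1 → ∀ k' : ℕ, 0 < k' →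
        ((Aab a' b' ^ k').map (Int.cast : ℤ → ℝ)).mulVec u = v →
        k = k' ∧ ((a' = a ∧ b' = b) ∨ (a' = -a ∧ b' = -b))) ∧
    (u = v →
      (∃ c : ℝ, u = c • fun i => ((![a, b] : Fin 2 → ℤ) i : ℝ)) ∧
      ∀ k'' : ℕ, 0 < k'' → ((Aab a b ^ k'').map (Int.cast : ℤ → ℝ)).mulVec u = v) := by
  rw [mulVec_Aab] at h
  set w : ℝ := (b:ℝ) * u 0 - (a:ℝ) * u 1 with hw
  have hv0 : v 0 = u 0 - k*a*w := by rw [← h]; simp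
  have hv1 : v 1 = u 1 - k*b*w := by rw [← h]; simp
  have hab0 := gcd_ne_zero a b hab
  have hkR : (k:ℝ) ≠ 0 := Nat.cast_ne_zero.mpr hk.ne'
  constructor
  · intro hne a' b' hab' k' hk' h'
    rw [mulVec_Aab] at h'
    set w' : ℝ := (b':ℝ) * u 0 - (a':ℝ) * u 1 with hw'
    have hv0' : v 0 = u 0 - k'*a'*w' := by rw [← h']; simp
    have hv1' : v 1 = u 1 - k'*b'*w' := by rw [← h']; simp
    have hab0' := gcd_ne_zero a' b' hab'
    have hk'R : (k':ℝ) ≠ 0 := Nat.cast_ne_zero.mpr hk'.ne'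
    -- w ≠ 0
    have hwne : w ≠ 0 := by
      intro h0
      apply hne
      funext i
      fin_cases i
      · show u 0 = v 0
        rw [hv0, h0]; ring
      · show u 1 = v 1
        rw [hv1, h0]; ring
    have e1 : (k:ℝ)*a*w = (k':ℝ)*a'*w' := by
      have := hv0.symm.trans hv0'; linarith
    have e2 : (k:ℝ)*b*w = (k':ℝ)*b'*w' := by
      have := hv1.symm.trans hv1'; linarith
    have hkw : (k:ℝ)*w ≠ 0 := mul_ne_zero hkR hwne
    have hw'ne : w' ≠ 0 := by
      intro h0
      rw [h0, mul_zero] at e1 e2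
      apply hab0
      constructor
      · have haR : (a:ℝ) * ((k:ℝ)*w) = 0 := by linear_combination e1
        rcases mul_eq_zero.mp haR with h2 | h2
        · exact_mod_cast h2
        · exact absurd h2 hkw
      · have hbR : (b:ℝ) * ((k:ℝ)*w) = 0 := by linear_combination e2
        rcases mul_eq_zero.mp hbR with h2 | h2
        · exact_mod_cast h2
        · exact absurd h2 hkw
    have hk'w' : (k':ℝ)*w' ≠ 0 := mul_ne_zero hk'R hw'ne
    -- cross relation a b' = a' b
    have hcrossR : ((a:ℝ)*b' - (a':ℝ)*b) * ((k':ℝ)*w') = 0 := by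
      linear_combination (b:ℝ) * e1 - (a:ℝ) * e2
    have hcross : a * b' = a' * b := by
      rcases mul_eq_zero.mp hcrossR with h2 | h2
      · have : ((a * b' : ℤ) : ℝ) = ((a' * b : ℤ) : ℝ) := by push_cast; linarith
        exact_mod_cast this
      · exact absurd h2 hk'w'
    -- divisibility: a' = ±a, b' = ±b
    have hcopa : IsCoprime a b := Int.isCoprime_iff_gcd_eq_one.mpr hab
    have hcopa' : IsCoprime a' b' := Int.isCoprime_iff_gcd_eq_one.mpr hab'
    have hda : a ∣ a' := hcopa.dvd_of_dvd_mul_right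
      (show a ∣ a' * b from ⟨b', by linear_combination -hcross⟩)
    have hda' : a' ∣ a := hcopa'.dvd_of_dvd_mul_right
      (show a' ∣ a * b' from ⟨b, by linear_combination hcross⟩)
    have hdb : b ∣ b' := hcopa.symm.dvd_of_dvd_mul_left
      (show b ∣ a * b' from ⟨a', by linear_combination hcross⟩)
    have hdb' : b' ∣ b := hcopa'.symm.dvd_of_dvd_mul_left
      (show b' ∣ a' * b from ⟨a, by linear_combination -hcross⟩)
    have hA : a' = a ∨ a' = -a := by
      have := Int.natAbs_eq_natAbs_iff.mp
        (Nat.dvd_antisymm (Int.natAbs_dvd_natAbs.mpr hda') (Int.natAbs_dvd_natAbs.mpr hda))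
      tauto
    have hB : b' = b ∨ b' = -b := by
      have := Int.natAbs_eq_natAbs_iff.mp
        (Nat.dvd_antisymm (Int.natAbs_dvd_natAbs.mpr hdb') (Int.natAbs_dvd_natAbs.mpr hdb))
      tauto
    have hsign : (a' = a ∧ b' = b) ∨ (a' = -a ∧ b' = -b) := by
      rcases hA with h1 | h1 <;> rcases hB with h2 | h2
      · left; exact ⟨h1, h2⟩
      · -- a' = a, b' = -b
        have h4 : 2 * (a * b) = 0 := by linear_combination -hcross + (-b)*h1 + a*h2
        have hz : a * b = 0 := by linarith
        rcases mul_eq_zero.mp hz with h0 | h0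
        · right; exact ⟨by rw [h1, h0]; ring, h2⟩
        · left; exact ⟨h1, by rw [h2, h0]; ring⟩
      · -- a' = -a, b' = b
        have h4 : 2 * (a * b) = 0 := by linear_combination hcross + b*h1 + (-a)*h2
        have hz : a * b = 0 := by linarith
        rcases mul_eq_zero.mp hz with h0 | h0
        · left; exact ⟨by rw [h1, h0]; ring, h2⟩
        · right; exact ⟨h1, by rw [h2, h0]; ring⟩
      · right; exact ⟨h1, h2⟩
    refine ⟨?_, hsign⟩
    -- k = k'
    have main : ∀ ε : ℝ, ((a':ℝ) = ε * a) → ((b':ℝ) = ε * b) → (ε*ε = 1) → k = k' := by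
      intro ε ha' hb' hε
      have hw'val : w' = ε * w := by rw [hw', hw, ha', hb']; ring
      have e1' : ((k:ℝ) - k') * ((a:ℝ) * w) = 0 := by
        rw [ha', hw'val] at e1
        linear_combination e1 + (k':ℝ) * (a:ℝ) * w * hε
      have e2' : ((k:ℝ) - k') * ((b:ℝ) * w) = 0 := by
        rw [hb', hw'val] at e2
        linear_combination e2 + (k':ℝ) * (b:ℝ) * w * hε
      have hkk : (k:ℝ) = k' := by
        by_cases ha0 : (a:ℝ) = 0
        · have hb0 : (b:ℝ) ≠ 0 := by
            intro hb0
            exact hab0 ⟨by exact_mod_cast ha0, by exact_mod_cast hb0⟩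
          rcases mul_eq_zero.mp e2' with h2 | h2
          · linarith
          · exact absurd h2 (mul_ne_zero hb0 hwne)
        · rcases mul_eq_zero.mp e1' with h2 | h2
          · linarith
          · exact absurd h2 (mul_ne_zero ha0 hwne)
      exact_mod_cast hkk
    rcases hsign with ⟨ha', hb'⟩ | ⟨ha', hb'⟩
    · exact main 1 (by rw [ha']; ring) (by rw [hb']; ring) (by ring)
    · exact main (-1) (by rw [ha']; push_cast; ring) (by rw [hb']; push_cast; ring) (by ring)
  · intro heq
    -- u = v : w = 0
    have h0a : (k:ℝ)*a*w = 0 := by rw [heq] at hv0; linarith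
    have h0b : (k:ℝ)*b*w = 0 := by rw [heq] at hv1; linarith
    have hw0 : w = 0 := by
      by_contra hwne
      have hkw : (k:ℝ)*w ≠ 0 := mul_ne_zero hkR hwne
      apply hab0
      constructor
      · have haR : (a:ℝ) * ((k:ℝ)*w) = 0 := by linear_combination h0a
        rcases mul_eq_zero.mp haR with h2 | h2
        · exact_mod_cast h2
        · exact absurd h2 hkw
      · have hbR : (b:ℝ) * ((k:ℝ)*w) = 0 := by linear_combination h0b
        rcases mul_eq_zero.mp hbR with h2 | h2
        · exact_mod_cast h2
        · exact absurd h2 hkw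
    have hwz : (b:ℝ) * u 0 - (a:ℝ) * u 1 = 0 := by rw [← hw]; exact hw0
    constructor
    · by_cases ha0 : (a:ℝ) = 0
      · have hb0 : (b:ℝ) ≠ 0 := by
          intro hb0
          exact hab0 ⟨by exact_mod_cast ha0, by exact_mod_cast hb0⟩
        refine ⟨u 1 / b, ?_⟩
        funext i
        fin_cases i
        · show u 0 = u 1 / b * ((![a, b] : Fin 2 → ℤ) 0 : ℝ)
          have hu0 : (b:ℝ) * u 0 = 0 := by linear_combination hwz + u 1 * ha0
          rcases mul_eq_zero.mp hu0 with h2 | h2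
          · exact absurd h2 hb0
          · simp [h2, ha0]
        · show u 1 = u 1 / b * ((![a, b] : Fin 2 → ℤ) 1 : ℝ)
          simp only [Matrix.cons_val_one, Matrix.head_cons, Matrix.cons_val_zero]
          field_simp
      · refine ⟨u 0 / a, ?_⟩
        funext i
        fin_cases i
        · show u 0 = u 0 / a * ((![a, b] : Fin 2 → ℤ) 0 : ℝ)
          simp only [Matrix.cons_val_zero]
          field_simp
        · show u 1 = u 0 / a * ((![a, b] : Fin 2 → ℤ) 1 : ℝ)
          simp only [Matrix.cons_val_one, Matrix.head_cons, Matrix.cons_val_zero]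
          field_simp
          linear_combination -hwz
    · intro k'' _
      rw [mulVec_Aab, ← hw, hw0, ← heq]
      funext i
      fin_cases i
      · show u 0 - (k'':ℝ)*a*0 = u 0
        ring
      · show u 1 - (k'':ℝ)*b*0 = u 1
        ring
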